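/- A G-invariant SDP feasibility set F_X = {X ⪰ 0 : A(X)=b} contains a positive definite matrix if and only if F_X ∩ A_G contains a positive definite matrix, where A_G is the commutant of the group G. -/

import Mathlib

open Matrix

/-- `P` is a permutation matrix. -/
def IsPermMatrix {n : ℕ} (P : Matrix (Fin n) (Fin n) ℝ) : Prop :=
  ∃ σ : Equiv.Perm (Fin n), ∀ i j, P i j = if i = σ j then 1 else 0

lemma IsPermMatrix.tmul {n : ℕ} {P : Matrix (Fin n) (Fin n) ℝ} (h : IsPermMatrix P) :
    Pᵀ * P = 1 := by
  obtain ⟨σ, hσ⟩ := h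
  ext i j
  simp [Matrix.mul_apply, Matrix.transpose_apply, hσ, Matrix.one_apply,
    ite_and, σ.injective.eq_iff, eq_comm]

lemma IsPermMatrix.mult {n : ℕ} {P : Matrix (Fin n) (Fin n) ℝ} (h : IsPermMatrix P) :
    P * Pᵀ = 1 := by
  obtain ⟨σ, hσ⟩ := h
  ext i j
  simp only [Matrix.mul_apply, Matrix.transpose_apply, hσ, Matrix.one_apply,
    ite_mul, one_mul, zero_mul, mul_ite, mul_one, mul_zero]
  simp_rw [← Equiv.symm_apply_eq, eq_comm (a := σ.symm j)]
  rw [Finset.sum_ite_eq' Finset.univ (σ.symm j)]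
  simp [Equiv.symm_apply_eq, eq_comm]

lemma posDef_smul_aux {k : ℕ} {M : Matrix (Fin k) (Fin k) ℝ} (hM : M.PosDef) {c : ℝ}
    (hc : 0 < c) : (c • M).PosDef := by
  constructor
  · show (c • M)ᴴ = c • M
    rw [Matrix.conjTranspose_smul, hM.1.eq, star_trivial]
  · intro x hx
    exact (hM.smul hc).2 hx

/-- A `G`-invariant SDP feasibility set `F = {X ⪰ 0 : 𝒜(X) = b}` contains a positive
definite matrix if and only if `F ∩ A_G` contains a positive definite matrix, where
`A_G` is the commutant of the group `G`. -/
theorem strict_feasibility_iff_commutant {n m : ℕ}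
    (𝒜 : Matrix (Fin n) (Fin n) ℝ →ₗ[ℝ] (Fin m → ℝ)) (b : Fin m → ℝ)
    (G : Finset (Matrix (Fin n) (Fin n) ℝ))
    (hone : (1 : Matrix (Fin n) (Fin n) ℝ) ∈ G)
    (hperm : ∀ P ∈ G, IsPermMatrix P)
    (hmul : ∀ P ∈ G, ∀ Q ∈ G, P * Q ∈ G)
    (hinv : ∀ P ∈ G, Pᵀ ∈ G)
    (F : Set (Matrix (Fin n) (Fin n) ℝ))
    (hF : F = {X | X.PosSemidef ∧ 𝒜 X = b})
    (hinvar : ∀ X ∈ F, ∀ P ∈ G, P * X * Pᵀ ∈ F) :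
    let AG : Set (Matrix (Fin n) (Fin n) ℝ) := {M | ∀ P ∈ G, P * M = M * P}
    (∃ X ∈ F, X.PosDef) ↔ (∃ X ∈ F ∩ AG, X.PosDef) := by
  intro AG
  constructor
  · rintro ⟨X, hXF, hXpd⟩
    have hcard : 0 < (G.card : ℝ) := by
      exact_mod_cast Finset.card_pos.mpr ⟨1, hone⟩
    set c : ℝ := (G.card : ℝ)⁻¹ with hc
    have hcpos : 0 < c := inv_pos.mpr hcard
    set S : Matrix (Fin n) (Fin n) ℝ := ∑ P ∈ G, P * X * Pᵀ with hSdef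
    have hmem : ∀ P ∈ G, P * X * Pᵀ ∈ F := fun P hP => hinvar X hXF P hP
    have hpsd : ∀ P ∈ G, (P * X * Pᵀ).PosSemidef := fun P hP => (hF ▸ hmem P hP).1
    have hAb : ∀ P ∈ G, 𝒜 (P * X * Pᵀ) = b := fun P hP => (hF ▸ hmem P hP).2
    have hSpd : S.PosDef := by
      have h1 : (1 : Matrix (Fin n) (Fin n) ℝ) * X * (1 : Matrix (Fin n) (Fin n) ℝ)ᵀ = X := by
        simp
      have he := Finset.add_sum_erase G (fun P => P * X * Pᵀ) hone
      rw [hSdef, ← he]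
      rw [h1]
      refine hXpd.add_posSemidef ?_
      exact Finset.sum_induction _ _ (fun a b ha hb => ha.add hb) Matrix.PosSemidef.zero
        (fun P hP => hpsd P (Finset.mem_of_mem_erase hP))
    have hSb : 𝒜 S = (G.card : ℝ) • b := by
      rw [hSdef, map_sum, Finset.sum_congr rfl hAb, Finset.sum_const,
        ← Nat.cast_smul_eq_nsmul ℝ]
    have hconj : ∀ Q ∈ G, Q * S * Qᵀ = S := by
      intro Q hQ
      have hQ1 : Qᵀ * Q = 1 := (hperm Q hQ).tmul
      calc Q * S * Qᵀ = ∑ P ∈ G, (Q * P) * X * (Q * P)ᵀ := by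
            rw [hSdef, Finset.mul_sum, Finset.sum_mul]
            exact Finset.sum_congr rfl fun P hP => by
              simp [Matrix.mul_assoc, Matrix.transpose_mul]
        _ = S := by
            rw [hSdef]
            refine Finset.sum_nbij' (fun P => Q * P) (fun R => Qᵀ * R) ?_ ?_ ?_ ?_ ?_
            · exact fun P hP => hmul Q hQ P hP
            · exact fun R hR => hmul Qᵀ (hinv Q hQ) R hR
            · intro P hP
              rw [← Matrix.mul_assoc, hQ1, Matrix.one_mul]
            · intro R hR
              rw [← Matrix.mul_assoc, (hperm Q hQ).mult, Matrix.one_mul]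
            · intro P hP
              rfl
    have hQS : ∀ Q ∈ G, Q * S = S * Q := by
      intro Q hQ
      have hQ1 : Qᵀ * Q = 1 := (hperm Q hQ).tmul
      calc Q * S = (Q * S * Qᵀ) * Q := by
            rw [Matrix.mul_assoc (Q * S), hQ1, Matrix.mul_one]
        _ = S * Q := by rw [hconj Q hQ]
    refine ⟨c • S, ⟨?_, ?_⟩, (posDef_smul_aux hSpd hcpos)⟩
    · rw [hF]
      refine ⟨(posDef_smul_aux hSpd hcpos).posSemidef, ?_⟩
      rw [_root_.map_smul, hSb, smul_smul, hc, inv_mul_cancel₀ hcard.ne', one_smul]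
    · intro Q hQ
      rw [Matrix.mul_smul, Matrix.smul_mul, hQS Q hQ]
  · rintro ⟨X, ⟨hXF, _⟩, hXpd⟩
    exact ⟨X, hXF, hXpd⟩
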